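/- For the quantum walk on the line with delocalized initial state γ_0 = c/√2, δ_0 = s/√2 on {-1,0} and parameter θ ≠ 0, π/2, π, 3π/2, the leftmost probabilities satisfy P(Y_t^L = -t-1) = P(Y_t^L = -t) = c^{2(t-1)}/2 for all t ≥ 1, where c = cos θ. -/

import Mathlib

noncomputable def lineWalk (c s : ℝ) : ℕ → (ℤ → ℝ) × (ℤ → ℝ)
  | 0 =>
      (fun x => if x = -1 ∨ x = 0 then c / Real.sqrt 2 else 0,
       fun x => if x = -1 ∨ x = 0 then s / Real.sqrt 2 else 0)
  | t + 1 =>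
      (fun x => c * (lineWalk c s t).1 (x + 1) + s * (lineWalk c s t).2 (x + 1),
       fun x => s * (lineWalk c s t).1 (x - 1) - c * (lineWalk c s t).2 (x - 1))

lemma lineWalk_supp (c s : ℝ) : ∀ t : ℕ, ∀ x : ℤ, x < -(t : ℤ) - 1 →
    (lineWalk c s t).1 x = 0 ∧ (lineWalk c s t).2 x = 0 := by
  intro t
  induction t with
  | zero =>
      intro x hx
      simp only [Nat.cast_zero, neg_zero, zero_sub] at hx
      have h1 : x ≠ -1 := by omega
      have h2 : x ≠ 0 := by omega
      simp [lineWalk, h1, h2]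
  | succ n ih =>
      intro x hx
      push_cast at hx
      have hx1 : x + 1 < -(n : ℤ) - 1 := by omega
      have hx2 : x - 1 < -(n : ℤ) - 1 := by omega
      obtain ⟨g1, d1⟩ := ih (x + 1) hx1
      obtain ⟨g2, d2⟩ := ih (x - 1) hx2
      simp [lineWalk, g1, d1, g2, d2]

lemma lineWalk_vals (c s : ℝ) (h : c ^ 2 + s ^ 2 = 1) : ∀ t : ℕ, 1 ≤ t →
    (lineWalk c s t).1 (-(t : ℤ) - 1) = c ^ (t - 1) / Real.sqrt 2 ∧
    (lineWalk c s t).1 (-(t : ℤ)) = c ^ (t - 1) / Real.sqrt 2 ∧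
    (lineWalk c s t).2 (-(t : ℤ) - 1) = 0 ∧
    (lineWalk c s t).2 (-(t : ℤ)) = 0 := by
  intro t
  induction t with
  | zero => omega
  | succ n ih =>
      intro _
      rcases Nat.eq_zero_or_pos n with hn | hn
      · subst hn
        have e1 : (-((1 : ℕ) : ℤ) - 1) + 1 = -1 := by norm_num
        have e2 : (-((1 : ℕ) : ℤ)) + 1 = 0 := by norm_num
        constructor
        · show c * (lineWalk c s 0).1 ((-((1:ℕ):ℤ) - 1) + 1) + s * (lineWalk c s 0).2 ((-((1:ℕ):ℤ) - 1) + 1) = _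
          rw [e1]
          simp only [lineWalk]
          norm_num
          rw [← mul_div_assoc, ← mul_div_assoc, ← add_div, ← sq, ← sq, h, one_div]
        refine ⟨?_, ?_, ?_⟩
        · show c * (lineWalk c s 0).1 (-((1:ℕ):ℤ) + 1) + s * (lineWalk c s 0).2 (-((1:ℕ):ℤ) + 1) = _
          rw [e2]
          simp only [lineWalk]
          norm_num
          rw [← mul_div_assoc, ← mul_div_assoc, ← add_div, ← sq, ← sq, h, one_div]
        · show s * (lineWalk c s 0).1 ((-((1:ℕ):ℤ) - 1) - 1) - c * (lineWalk c s 0).2 ((-((1:ℕ):ℤ) - 1) - 1) = 0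
          have h1 : (-((1:ℕ):ℤ) - 1) - 1 = -3 := by norm_num
          rw [h1]
          simp [lineWalk]
        · show s * (lineWalk c s 0).1 ((-((1:ℕ):ℤ)) - 1) - c * (lineWalk c s 0).2 ((-((1:ℕ):ℤ)) - 1) = 0
          have h1 : (-((1:ℕ):ℤ)) - 1 = -2 := by norm_num
          rw [h1]
          simp [lineWalk]
      · obtain ⟨g1, g2, d1, d2⟩ := ih hn
        have hcast : (-(((n:ℕ)+1 : ℕ) : ℤ) - 1) + 1 = -(n : ℤ) - 1 := by push_cast; ring
        have hcast2 : (-(((n:ℕ)+1 : ℕ) : ℤ)) + 1 = -(n : ℤ) := by push_cast; ring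
        have hsupp1 := lineWalk_supp c s n ((-(((n:ℕ)+1 : ℕ) : ℤ) - 1) - 1) (by push_cast; omega)
        have hsupp2 := lineWalk_supp c s n ((-(((n:ℕ)+1 : ℕ) : ℤ)) - 1) (by push_cast; omega)
        have hexp : n + 1 - 1 = (n - 1) + 1 := by omega
        refine ⟨?_, ?_, ?_, ?_⟩
        · show c * (lineWalk c s n).1 _ + s * (lineWalk c s n).2 _ = _
          rw [hcast, g1, d1, hexp, pow_succ]
          ring
        · show c * (lineWalk c s n).1 _ + s * (lineWalk c s n).2 _ = _
          rw [hcast2, g2, d2, hexp, pow_succ]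
          ring
        · show s * (lineWalk c s n).1 _ - c * (lineWalk c s n).2 _ = 0
          rw [hsupp1.1, hsupp1.2]; ring
        · show s * (lineWalk c s n).1 _ - c * (lineWalk c s n).2 _ = 0
          rw [hsupp2.1, hsupp2.2]; ring

theorem line_walk_leftmost_probability (θ : ℝ) (hθ : θ ∈ Set.Ico 0 (2 * Real.pi))
    (h0 : θ ≠ 0) (h1 : θ ≠ Real.pi / 2) (h2 : θ ≠ Real.pi) (h3 : θ ≠ 3 * Real.pi / 2) :
    ∀ t : ℕ, 1 ≤ t →
      (lineWalk (Real.cos θ) (Real.sin θ) t).1 (-(t : ℤ) - 1) ^ 2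
          + (lineWalk (Real.cos θ) (Real.sin θ) t).2 (-(t : ℤ) - 1) ^ 2
        = Real.cos θ ^ (2 * (t - 1)) / 2 ∧
      (lineWalk (Real.cos θ) (Real.sin θ) t).1 (-(t : ℤ)) ^ 2
          + (lineWalk (Real.cos θ) (Real.sin θ) t).2 (-(t : ℤ)) ^ 2
        = Real.cos θ ^ (2 * (t - 1)) / 2 := by
  intro t ht
  obtain ⟨g1, g2, d1, d2⟩ := lineWalk_vals (Real.cos θ) (Real.sin θ)
    (by rw [add_comm]; exact Real.sin_sq_add_cos_sq θ) t ht
  have hs : (Real.sqrt 2) ^ 2 = 2 := Real.sq_sqrt (by norm_num)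
  have key : (Real.cos θ ^ (t - 1) / Real.sqrt 2) ^ 2 = Real.cos θ ^ (2 * (t - 1)) / 2 := by
    rw [div_pow, hs, ← pow_mul, mul_comm]
  rw [g1, g2, d1, d2]
  norm_num [key]
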